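/- Let X be a real Hilbert space and E : X → ℝ a continuously Fréchet differentiable functional satisfying the Palais–Smale condition. Assume: (a) E(0) = 0; (b) there exist constants r, α > 0 such that E(v) ≥ α for every v ∈ X with ‖v‖ = r; (c) there exists h ∈ X with ‖h‖ > r and E(h) ≤ 0. Let Γ = {g ∈ C⁰([0,1]; X) : g(0) = 0, g(1) = h} and c = inf_{g∈Γ} max_{t∈[0,1]} E(g(t)). Then c ≥ α and c is a critical value of E, i.e. there exists u ∈ X with E'(u) = 0 in X* and E(u) = c. -/

import Mathlib

open Filter
open scoped InnerProductSpace

section MountainPassAux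


theorem my_ekeland {Y : Type*} [MetricSpace Y] [CompleteSpace Y] (F : Y → ℝ) (B : ℝ)
    (hB : ∀ y, B ≤ F y)
    (hlsc : ∀ (u : ℕ → Y) (y : Y) (L : ℝ), Tendsto u atTop (nhds y) →
      Tendsto (fun n => F (u n)) atTop (nhds L) → F y ≤ L)
    (ε : ℝ) (hε : 0 < ε) (v₀ : Y) :
    ∃ v : Y, F v ≤ F v₀ ∧ ∀ w : Y, F v ≤ F w + ε * dist v w := by
  -- the partial order: w ≼ v ↔ F w + ε * dist v w ≤ F v
  set R : Y → Y → Prop := fun v w => F w + ε * dist v w ≤ F v with hR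
  have hrefl : ∀ v, R v v := by intro v; simp [hR]
  have htrans : ∀ u v w, R u v → R v w → R u w := by
    intro u v w h1 h2
    have : dist u w ≤ dist u v + dist v w := dist_triangle u v w
    have := mul_le_mul_of_nonneg_left this hε.le
    simp only [hR] at *
    nlinarith
  -- choice step
  have key : ∀ v : Y, ∀ η : ℝ, 0 < η → ∃ v' : Y, R v v' ∧ ∀ w, R v' w → F v' ≤ F w + η := by
    intro v η hη
    set S : Set ℝ := F '' {w | R v w} with hS
    have hSne : S.Nonempty := ⟨F v, v, hrefl v, rfl⟩
    have hSbd : BddBelow S := ⟨B, by rintro x ⟨w, -, rfl⟩; exact hB w⟩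
    obtain ⟨x, hxS, hx⟩ := exists_lt_of_csInf_lt hSne (lt_add_of_pos_right (sInf S) hη)
    obtain ⟨v', hv', rfl⟩ := hxS
    refine ⟨v', hv', fun w hw => ?_⟩
    have hwS : F w ∈ S := ⟨w, htrans v v' w hv' hw, rfl⟩
    have := csInf_le hSbd hwS
    linarith
  -- build sequence
  choose f hf1 hf2 using fun v (n : ℕ) => key v ((1/2)^n) (by positivity)
  set u : ℕ → Y := fun n => Nat.rec v₀ (fun n v => f v n) n with hu
  have hstep : ∀ n, R (u n) (u (n+1)) := fun n => hf1 (u n) n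
  have hstep2 : ∀ n, ∀ w, R (u (n+1)) w → F (u (n+1)) ≤ F w + (1/2)^n := fun n => hf2 (u n) n
  have hchain : ∀ m n, m ≤ n → R (u m) (u n) := by
    intro m n hmn
    induction n with
    | zero => have : m = 0 := Nat.le_zero.mp hmn; subst this; exact hrefl _
    | succ n ih =>
      rcases Nat.lt_or_ge m (n+1) with hlt | hge
      · exact htrans _ _ _ (ih (Nat.lt_succ_iff.mp hlt)) (hstep n)
      · have : m = n + 1 := le_antisymm hmn hge
        subst this; exact hrefl _
  have hmono : ∀ m n, m ≤ n → F (u n) ≤ F (u m) := by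
    intro m n hmn
    have := hchain m n hmn
    have hd : 0 ≤ ε * dist (u m) (u n) := by positivity
    simp only [hR] at this; linarith
  -- F (u n) converges
  have hbdd : BddBelow (Set.range fun n => F (u n)) := ⟨B, by rintro x ⟨n, rfl⟩; exact hB _⟩
  set L : ℝ := ⨅ n, F (u n) with hL
  have hFlim : Tendsto (fun n => F (u n)) atTop (nhds L) :=
    tendsto_atTop_ciInf (fun m n hmn => hmono m n hmn) hbdd
  have hLle : ∀ n, L ≤ F (u n) := fun n => ciInf_le hbdd n
  -- Cauchy
  have hcauchy : CauchySeq u := by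
    rw [Metric.cauchySeq_iff']
    intro η hη
    obtain ⟨N, hN⟩ := (Metric.tendsto_atTop.mp hFlim) (ε * η) (by positivity)
    refine ⟨N, fun n hn => ?_⟩
    have h1 := hchain N n hn
    simp only [hR] at h1
    have h2 := hLle n
    have h3 := hN N le_rfl
    rw [Real.dist_eq, abs_lt] at h3
    have : ε * dist (u N) (u n) < ε * η := by linarith
    have := (mul_lt_mul_iff_right₀ hε).mp this
    rwa [dist_comm] at this
  obtain ⟨v, hv⟩ := cauchySeq_tendsto_of_complete hcauchy
  -- v ≼ u n for all n
  have hFv : F v ≤ L := hlsc u v L hv hFlim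
  have hvchain : ∀ n, R (u n) v := by
    intro n
    have hdist : Tendsto (fun m => F (u m) + ε * dist (u n) (u m)) atTop
        (nhds (L + ε * dist (u n) v)) :=
      hFlim.add (tendsto_const_nhds.mul (((continuous_const.dist continuous_id).tendsto v).comp hv))
    have hle : ∀ᶠ m in atTop, F (u m) + ε * dist (u n) (u m) ≤ F (u n) := by
      filter_upwards [eventually_ge_atTop n] with m hm
      exact hchain n m hm
    have := le_of_tendsto hdist hle
    simp only [hR]
    linarith
  refine ⟨v, le_trans hFv (hLle 0), fun w => ?_⟩
  by_contra hcon
  push_neg at hcon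
  have hw : R v w := by simp only [hR]; linarith
  have hwn : ∀ n, R (u n) w := fun n => htrans _ _ _ (hvchain n) hw
  have hFw : ∀ n, F (u (n+1)) ≤ F w + (1/2)^n := fun n => hstep2 n w (hwn (n+1))
  have : L ≤ F w := by
    have h1 : Tendsto (fun n => F (u (n+1))) atTop (nhds L) :=
      hFlim.comp (tendsto_add_atTop_nat 1)
    have h2 : Tendsto (fun n : ℕ => F w + (1/2:ℝ)^n) atTop (nhds (F w + 0)) :=
      tendsto_const_nhds.add (tendsto_pow_atTop_nhds_zero_of_lt_one (by norm_num) (by norm_num))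
    rw [add_zero] at h2
    exact le_of_tendsto_of_tendsto h1 h2 (Eventually.of_forall fun n => hFw n)
  have hd : 0 ≤ ε * dist v w := by positivity
  linarith


variable {X : Type*} [NormedAddCommGroup X] [InnerProductSpace ℝ X] [CompleteSpace X]

lemma mp_compact (E : X → ℝ) (hE : Continuous E) (g : C(↥(Set.Icc (0:ℝ) 1), X)) :
    IsCompact (E '' Set.range ⇑g) := (isCompact_range g.continuous).image hE

lemma mp_ne (E : X → ℝ) (g : C(↥(Set.Icc (0:ℝ) 1), X)) : (E '' Set.range ⇑g).Nonempty :=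
  ⟨E (g ⟨0, by norm_num⟩), Set.mem_image_of_mem E (Set.mem_range_self _)⟩

lemma mp_le_sup (E : X → ℝ) (hE : Continuous E) (g : C(↥(Set.Icc (0:ℝ) 1), X)) (t) :
    E (g t) ≤ sSup (E '' Set.range ⇑g) :=
  le_csSup (mp_compact E hE g).bddAbove (Set.mem_image_of_mem E (Set.mem_range_self _))

lemma mp_sup_le (E : X → ℝ) (g : C(↥(Set.Icc (0:ℝ) 1), X)) (b : ℝ)
    (hb : ∀ t, E (g t) ≤ b) : sSup (E '' Set.range ⇑g) ≤ b := by
  apply csSup_le (mp_ne E g)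
  rintro x ⟨y, ⟨t, rfl⟩, rfl⟩; exact hb t

set_option maxHeartbeats 1000000 in
lemma mp_no_crit (E : X → ℝ) (E' : X → X →L[ℝ] ℝ)
    (hE : ∀ x, HasFDerivAt E (E' x) x) (hE' : Continuous E')
    (h : X) (c α : ℝ) (hα : 0 < α) (hαc : α ≤ c) (hE0 : E 0 = 0) (hEh : E h ≤ 0)
    (hSc : ∀ g : C(↥(Set.Icc (0:ℝ) 1), X), g ⟨0, by norm_num⟩ = 0 → g ⟨1, by norm_num⟩ = h →
      c ≤ sSup (E '' Set.range ⇑g))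
    (hex : ∀ ε : ℝ, 0 < ε → ∃ g : C(↥(Set.Icc (0:ℝ) 1), X), g ⟨0, by norm_num⟩ = 0 ∧
      g ⟨1, by norm_num⟩ = h ∧ sSup (E '' Set.range ⇑g) < c + ε)
    (ε₀ δ : ℝ) (hε₀ : 0 < ε₀) (hδ : 0 < δ)
    (hcrit : ∀ u : X, |E u - c| ≤ ε₀ → δ ≤ ‖E' u‖) : False := by
  have hEc : Continuous E := continuous_iff_continuousAt.mpr fun x => (hE x).continuousAt
  set I : Set ℝ := Set.Icc 0 1 with hI
  set i0 : ↥I := ⟨0, by norm_num [hI]⟩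
  set i1 : ↥I := ⟨1, by norm_num [hI]⟩
  set Γ : Set C(↥I, X) := {g | g i0 = 0 ∧ g i1 = h} with hΓ
  have hΓclosed : IsClosed Γ := by
    have h1 : IsClosed {g : C(↥I, X) | g i0 = 0} :=
      isClosed_singleton.preimage (continuous_eval_const i0)
    have h2 : IsClosed {g : C(↥I, X) | g i1 = h} :=
      isClosed_singleton.preimage (continuous_eval_const i1)
    exact h1.inter h2
  haveI : CompleteSpace ↥Γ := hΓclosed.completeSpace_coe
  set F : ↥Γ → ℝ := fun g => sSup (E '' Set.range ⇑(g : C(↥I, X))) with hF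
  have hFB : ∀ y : ↥Γ, c ≤ F y := fun y => hSc _ y.2.1 y.2.2
  -- lower semicontinuity of F
  have hlsc : ∀ (u : ℕ → ↥Γ) (y : ↥Γ) (L : ℝ), Tendsto u atTop (nhds y) →
      Tendsto (fun n => F (u n)) atTop (nhds L) → F y ≤ L := by
    intro u y L hu hFu
    apply csSup_le (mp_ne E _)
    rintro x ⟨z, ⟨t, rfl⟩, rfl⟩
    have hval : Tendsto (fun n => ((u n : C(↥I, X)))) atTop (nhds (y : C(↥I, X))) :=
      ((continuous_subtype_val.tendsto y).comp hu)
    have happ : Tendsto (fun n => ((u n : C(↥I, X))) t) atTop (nhds ((y : C(↥I, X)) t)) :=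
      ((continuous_eval_const t).tendsto _).comp hval
    have hEt : Tendsto (fun n => E (((u n : C(↥I, X))) t)) atTop (nhds (E ((y : C(↥I, X)) t))) :=
      (hEc.tendsto _).comp happ
    exact le_of_tendsto_of_tendsto hEt hFu
      (Eventually.of_forall fun n => mp_le_sup E hEc _ t)
  set ε : ℝ := min ε₀ δ / 4 with hεdef
  have hε : 0 < ε := by positivity
  obtain ⟨g₀, hg₀0, hg₀1, hg₀⟩ := hex ε hε
  obtain ⟨v, hv1, hv2⟩ := my_ekeland F c hFB hlsc ε hε ⟨g₀, hg₀0, hg₀1⟩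
  set G : C(↥I, X) := (v : C(↥I, X)) with hGdef
  have hG0 : G i0 = 0 := v.2.1
  have hG1 : G i1 = h := v.2.2
  set M : ℝ := F v with hM
  have hcM : c ≤ M := hFB v
  have hMlt : M < c + ε := lt_of_le_of_lt hv1 hg₀
  have hEleM : ∀ t, E (G t) ≤ M := fun t => mp_le_sup E hEc G t
  set ρ : ℝ := min α ε₀ / 2 with hρdef
  have hρ : 0 < ρ := by positivity
  have hρα : ρ ≤ α / 2 := by
    rw [hρdef]; have := min_le_left α ε₀; linarith
  have hρε₀ : ρ ≤ ε₀ / 2 := by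
    rw [hρdef]; have := min_le_right α ε₀; linarith
  have hεε₀ : ε ≤ ε₀ := by
    rw [hεdef]; have := min_le_left ε₀ δ; linarith
  have hεδ : ε ≤ δ / 4 := by
    rw [hεdef]; have := min_le_right ε₀ δ; linarith
  -- the cutoff function
  set χ : ℝ → ℝ := fun a => max 0 (min 1 ((a - (M - ρ)) * (2/ρ))) with hχdef
  have hχcont : Continuous χ :=
    continuous_const.max (continuous_const.min
      ((continuous_id.sub continuous_const).mul continuous_const))
  have hχ0le : ∀ a, 0 ≤ χ a := fun a => le_max_left _ _
  have hχle1 : ∀ a, χ a ≤ 1 := fun a => max_le zero_le_one (min_le_left _ _)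
  have hχ0 : ∀ a, a ≤ M - ρ → χ a = 0 := by
    intro a ha
    have h1 : (a - (M - ρ)) * (2/ρ) ≤ 0 :=
      mul_nonpos_of_nonpos_of_nonneg (by linarith) (by positivity)
    exact max_eq_left ((min_le_right _ _).trans h1)
  have hχ1 : ∀ a, M - ρ/2 ≤ a → χ a = 1 := by
    intro a ha
    have h1 : (1:ℝ) ≤ (a - (M - ρ)) * (2/ρ) := by
      have h2 : (ρ/2) * (2/ρ) = 1 := by field_simp
      have h3 : (ρ/2) * (2/ρ) ≤ (a - (M - ρ)) * (2/ρ) :=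
        mul_le_mul_of_nonneg_right (by linarith) (by positivity)
      linarith
    rw [hχdef]
    simp only [min_eq_left h1]
    exact max_eq_right zero_le_one
  have hχpos : ∀ a, 0 < χ a → M - ρ < a := by
    intro a ha
    by_contra hcon
    push_neg at hcon
    rw [hχ0 a hcon] at ha
    exact lt_irrefl 0 ha
  -- the gradient field
  set grad : X → X := fun u => (InnerProductSpace.toDual ℝ X).symm (E' u) with hgrad
  have hgradc : Continuous grad := (InnerProductSpace.toDual ℝ X).symm.continuous.comp hE'
  have hgradn : ∀ u, ‖grad u‖ = ‖E' u‖ := fun u => LinearIsometryEquiv.norm_map _ _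
  have hgradi : ∀ (u w : X), ⟪grad u, w⟫_ℝ = E' u w := fun u w =>
    InnerProductSpace.toDual_symm_apply
  -- the vector field W
  set W : ↥I → X := fun t => χ (E (G t)) • ‖grad (G t)‖⁻¹ • grad (G t) with hW
  have hunit : ∀ x : X, ‖‖x‖⁻¹ • x‖ ≤ 1 := by
    intro x
    rcases eq_or_ne x 0 with rfl | hx
    · simp
    · rw [norm_smul, norm_inv, norm_norm, inv_mul_cancel₀ (norm_ne_zero_iff.mpr hx)]
  have hWle : ∀ t, ‖W t‖ ≤ χ (E (G t)) := by
    intro t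
    rw [hW]
    simp only
    rw [norm_smul, Real.norm_eq_abs, abs_of_nonneg (hχ0le _)]
    calc χ (E (G t)) * ‖‖grad (G t)‖⁻¹ • grad (G t)‖ ≤ χ (E (G t)) * 1 :=
          mul_le_mul_of_nonneg_left (hunit _) (hχ0le _)
      _ = χ (E (G t)) := mul_one _
  have hstrip : ∀ t, 0 < χ (E (G t)) → δ ≤ ‖E' (G t)‖ := by
    intro t ht
    apply hcrit
    have h1 := hχpos _ ht
    have h2 := hEleM t
    rw [abs_le]
    constructor <;> linarith
  have hWcont : Continuous W := by
    rw [continuous_iff_continuousAt]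
    intro t₀
    by_cases hz : grad (G t₀) = 0
    · have hval : W t₀ = 0 := by rw [hW]; simp [hz]
      rw [ContinuousAt, hval]
      have hχz : χ (E (G t₀)) = 0 := by
        by_contra hne
        have hpos : 0 < χ (E (G t₀)) := lt_of_le_of_ne (hχ0le _) (Ne.symm hne)
        have := hstrip t₀ hpos
        rw [← hgradn, hz, norm_zero] at this
        linarith
      apply squeeze_zero_norm hWle
      have : Tendsto (fun t => χ (E (G t))) (nhds t₀) (nhds (χ (E (G t₀)))) :=
        ((hχcont.comp (hEc.comp G.continuous)).tendsto t₀)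
      rwa [hχz] at this
    · have hnz : ‖grad (G t₀)‖ ≠ 0 := norm_ne_zero_iff.mpr hz
      apply ContinuousAt.smul
      · exact (hχcont.comp (hEc.comp G.continuous)).continuousAt
      · apply ContinuousAt.smul
        · exact ((continuous_norm.comp (hgradc.comp G.continuous)).continuousAt).inv₀ hnz
        · exact (hgradc.comp G.continuous).continuousAt
  -- derivative pairing identity
  have hEW : ∀ t, E' (G t) (W t) = χ (E (G t)) * ‖E' (G t)‖ := by
    intro t
    rw [hW]
    simp only [map_smul, smul_eq_mul]
    rcases eq_or_ne (grad (G t)) 0 with hz | hz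
    · rw [hz]
      simp [← hgradn, hz]
    · have hn : ‖grad (G t)‖ ≠ 0 := norm_ne_zero_iff.mpr hz
      rw [← hgradi, real_inner_self_eq_norm_sq, ← hgradn]
      field_simp
  -- uniform continuity to control E' along the deformation
  set f : ↥I × ↥I → ℝ := fun p => ‖E' (G p.1 - (p.2 : ℝ) • W p.1) - E' (G p.1)‖ with hf
  have hfc : Continuous f := by
    have c1 : Continuous fun p : ↥I × ↥I => G p.1 := G.continuous.comp continuous_fst
    have c2 : Continuous fun p : ↥I × ↥I => ((p.2 : ℝ) • W p.1) :=
      ((continuous_subtype_val.comp continuous_snd).smul (hWcont.comp continuous_fst))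
    exact ((hE'.comp (c1.sub c2)).sub (hE'.comp c1)).norm
  have hUC := CompactSpace.uniformContinuous_of_continuous hfc
  obtain ⟨d₁, hd₁, hUCd⟩ := Metric.uniformContinuous_iff.mp hUC (δ/2) (by positivity)
  set s : ℝ := min (min (d₁/2) 1) (ρ/δ) with hsdef
  have hs : 0 < s := by positivity
  have hs1 : s ≤ 1 := le_trans (min_le_left _ _) (min_le_right _ _)
  have hsd : s ≤ d₁/2 := le_trans (min_le_left _ _) (min_le_left _ _)
  have hsρ : s * δ ≤ ρ := by
    have h1 : s ≤ ρ/δ := min_le_right _ _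
    calc s * δ ≤ (ρ/δ) * δ := mul_le_mul_of_nonneg_right h1 hδ.le
      _ = ρ := by field_simp
  have hUC' : ∀ (t : ↥I) (σ : ℝ), 0 ≤ σ → σ ≤ s →
      ‖E' (G t - σ • W t) - E' (G t)‖ < δ/2 := by
    intro t σ hσ0 hσs
    have hσI : σ ∈ I := ⟨hσ0, hσs.trans hs1⟩
    have h0I : (0:ℝ) ∈ I := by constructor <;> norm_num
    have hdist : dist ((t, ⟨σ, hσI⟩) : ↥I × ↥I) ((t, ⟨0, h0I⟩) : ↥I × ↥I) < d₁ := by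
      rw [Prod.dist_eq]
      simp only [dist_self]
      rw [Subtype.dist_eq, Real.dist_eq]
      simp only [sub_zero]
      rw [abs_of_nonneg hσ0]
      apply max_lt (by linarith) (by linarith)
    have := hUCd hdist
    rw [Real.dist_eq] at this
    have hf0 : f (t, ⟨0, h0I⟩) = 0 := by
      rw [hf]; simp
    rw [hf0, sub_zero] at this
    calc ‖E' (G t - σ • W t) - E' (G t)‖ = f (t, ⟨σ, hσI⟩) := rfl
      _ ≤ |f (t, ⟨σ, hσI⟩)| := le_abs_self _
      _ < δ/2 := this
  -- pointwise decrease estimate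
  have key : ∀ t, E (G t - s • W t) ≤ E (G t) - s * (χ (E (G t)) * (δ/2)) := by
    intro t
    by_cases hχz : χ (E (G t)) = 0
    · have hWz : W t = 0 := by rw [hW]; simp only; rw [hχz, zero_smul]
      rw [hWz, smul_zero, sub_zero, hχz]
      ring_nf
      exact le_refl _
    · have hχp : 0 < χ (E (G t)) := lt_of_le_of_ne (hχ0le _) (Ne.symm hχz)
      have hδt : δ ≤ ‖E' (G t)‖ := hstrip t hχp
      set ψ : ℝ → ℝ := fun σ => E (G t - σ • W t) with hψ
      have hψd : ∀ σ : ℝ, HasDerivAt ψ (-(E' (G t - σ • W t) (W t))) σ := by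
        intro σ
        have h1 : HasDerivAt (fun σ : ℝ => σ • W t) (W t) σ := by
          simpa using (hasDerivAt_id σ).smul_const (W t)
        have h2 : HasDerivAt (fun σ : ℝ => G t - σ • W t) (-(W t)) σ := h1.const_sub (G t)
        have h3 := (hE (G t - σ • W t)).comp_hasDerivAt σ h2
        convert h3 using 1
        · rfl
        · rfl
        · rfl
        · simp [map_neg]
      obtain ⟨σ₀, hσ₀mem, hσ₀⟩ := exists_hasDerivAt_eq_slope ψ
        (fun σ => -(E' (G t - σ • W t) (W t))) hs
        (HasDerivAt.continuousOn fun σ _ => hψd σ) (fun σ _ => hψd σ)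
      -- bound the derivative at σ₀
      have hb1 : ‖E' (G t - σ₀ • W t) - E' (G t)‖ < δ/2 :=
        hUC' t σ₀ hσ₀mem.1.le hσ₀mem.2.le
      have hb2 : |(E' (G t - σ₀ • W t) - E' (G t)) (W t)| ≤ (δ/2) * χ (E (G t)) := by
        calc |(E' (G t - σ₀ • W t) - E' (G t)) (W t)|
            ≤ ‖E' (G t - σ₀ • W t) - E' (G t)‖ * ‖W t‖ :=
              (E' (G t - σ₀ • W t) - E' (G t)).le_opNorm (W t)
          _ ≤ (δ/2) * χ (E (G t)) :=
              mul_le_mul hb1.le (hWle t) (norm_nonneg _) (by positivity)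
      have hb3 : χ (E (G t)) * δ ≤ E' (G t) (W t) := by
        rw [hEW t]
        exact mul_le_mul_of_nonneg_left hδt (hχ0le _)
      have hb4 : χ (E (G t)) * (δ/2) ≤ E' (G t - σ₀ • W t) (W t) := by
        have hsplit : E' (G t - σ₀ • W t) (W t) =
            E' (G t) (W t) + (E' (G t - σ₀ • W t) - E' (G t)) (W t) := by
          simp [ContinuousLinearMap.sub_apply]
        have h5 := (abs_le.mp hb2).1
        rw [hsplit]
        linarith
      -- combine with MVT
      have hψ0 : ψ 0 = E (G t) := by rw [hψ]; simp
      have hψs : ψ s = E (G t - s • W t) := rfl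
      rw [sub_zero, eq_div_iff hs.ne'] at hσ₀
      have h6 : s * (χ (E (G t)) * (δ/2)) ≤ s * (E' (G t - σ₀ • W t) (W t)) :=
        mul_le_mul_of_nonneg_left hb4 hs.le
      have h7 : -(E' (G t - σ₀ • W t) (W t)) * s = ψ s - ψ 0 := hσ₀
      rw [hψ0, hψs] at h7
      have h8 : E (G t - s • W t) - E (G t) = -(E' (G t - σ₀ • W t) (W t)) * s := h7.symm
      nlinarith [h6, h8]
  -- global decrease of the max
  have hGs : ∀ t, E (G t - s • W t) ≤ M - s * (δ/2) := by
    intro t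
    by_cases hhigh : M - ρ/2 ≤ E (G t)
    · have := key t
      rw [hχ1 _ hhigh] at this
      have h2 := hEleM t
      linarith
    · push_neg at hhigh
      have h1 := key t
      have h2 : 0 ≤ s * (χ (E (G t)) * (δ/2)) := by positivity
      have h3 : s * (δ/2) ≤ ρ/2 := by linarith [hsρ]
      linarith
  -- the deformed path
  set Gs : C(↥I, X) := ⟨fun t => G t - s • W t,
    G.continuous.sub (continuous_const.smul hWcont)⟩ with hGs_def
  have hW0 : W i0 = 0 := by
    rw [hW]
    simp only
    rw [hG0, hE0, hχ0 0 (by linarith), zero_smul]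
  have hW1 : W i1 = 0 := by
    rw [hW]
    simp only
    rw [hG1, hχ0 (E h) (by linarith), zero_smul]
  have hGs0 : Gs i0 = 0 := by
    rw [hGs_def]
    simp only [ContinuousMap.coe_mk]
    rw [hW0, smul_zero, hG0, sub_zero]
  have hGs1 : Gs i1 = h := by
    rw [hGs_def]
    simp only [ContinuousMap.coe_mk]
    rw [hW1, smul_zero, hG1, sub_zero]
  set w : ↥Γ := ⟨Gs, hGs0, hGs1⟩ with hw
  -- Ekeland inequality versus decrease
  have hFw : F w ≤ M - s * (δ/2) := mp_sup_le E Gs _ hGs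
  have hdistw : dist v w ≤ s := by
    rw [Subtype.dist_eq]
    apply (ContinuousMap.dist_le hs.le).mpr
    intro t
    rw [dist_eq_norm]
    show ‖G t - (G t - s • W t)‖ ≤ s
    rw [sub_sub_cancel, norm_smul, Real.norm_eq_abs, abs_of_nonneg hs.le]
    calc s * ‖W t‖ ≤ s * 1 :=
        mul_le_mul_of_nonneg_left ((hWle t).trans (hχle1 _)) hs.le
      _ = s := mul_one s
  have hek := hv2 w
  have : M ≤ M - s * (δ/2) + ε * s := by
    calc M = F v := rfl
      _ ≤ F w + ε * dist v w := hek
      _ ≤ M - s * (δ/2) + ε * s := by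
          have h1 : ε * dist v w ≤ ε * s := mul_le_mul_of_nonneg_left hdistw hε.le
          linarith
  nlinarith [this, hεδ, hs, hδ]


lemma mp_extend (E : X → ℝ) (g : C(↥(Set.Icc (0:ℝ) 1), X)) :
    ∃ G : ℝ → X, ContinuousOn G (Set.Icc 0 1) ∧ G 0 = g ⟨0, by norm_num⟩ ∧
      G 1 = g ⟨1, by norm_num⟩ ∧ E '' (G '' Set.Icc 0 1) = E '' Set.range ⇑g := by
  refine ⟨fun t => g (Set.projIcc 0 1 zero_le_one t),
    (g.continuous.comp continuous_projIcc).continuousOn, by simp, by simp, ?_⟩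
  have himg : (fun t => g (Set.projIcc 0 1 zero_le_one t)) '' Set.Icc 0 1 = Set.range ⇑g := by
    ext x
    constructor
    · rintro ⟨t, ht, rfl⟩
      exact ⟨Set.projIcc 0 1 zero_le_one t, rfl⟩
    · rintro ⟨t, rfl⟩
      exact ⟨t.1, t.2, by simp [Set.projIcc_of_mem, t.2]⟩
  rw [himg]

lemma mp_restrict (E : X → ℝ) (G : ℝ → X) (hG : ContinuousOn G (Set.Icc 0 1)) :
    ∃ g : C(↥(Set.Icc (0:ℝ) 1), X), g ⟨0, by norm_num⟩ = G 0 ∧ g ⟨1, by norm_num⟩ = G 1 ∧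
      E '' Set.range ⇑g = E '' (G '' Set.Icc 0 1) := by
  refine ⟨⟨(Set.Icc 0 1).domRestrict G, hG.restrict⟩, rfl, rfl, ?_⟩
  rw [ContinuousMap.coe_mk, Set.range_restrict]

end MountainPassAux

/-- **Mountain pass theorem.** -/
theorem mountain_pass_theorem
    {X : Type*} [NormedAddCommGroup X] [InnerProductSpace ℝ X] [CompleteSpace X]
    (E : X → ℝ) (E' : X → X →L[ℝ] ℝ)
    (hE : ∀ x, HasFDerivAt E (E' x) x) (hE' : Continuous E')
    (PS : ∀ u : ℕ → X, (∃ M : ℝ, ∀ k, |E (u k)| ≤ M) →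
      Tendsto (fun k => ‖E' (u k)‖) atTop (nhds 0) →
      ∃ φ : ℕ → ℕ, StrictMono φ ∧ ∃ x : X, Tendsto (u ∘ φ) atTop (nhds x))
    (hE0 : E 0 = 0)
    (r α : ℝ) (hr : 0 < r) (hα : 0 < α)
    (hsphere : ∀ v : X, ‖v‖ = r → α ≤ E v)
    (h : X) (hh : r < ‖h‖) (hEh : E h ≤ 0) :
    ∀ c : ℝ,
      c = sInf {m : ℝ | ∃ g : ℝ → X, ContinuousOn g (Set.Icc 0 1) ∧
            g 0 = 0 ∧ g 1 = h ∧ m = sSup (E '' (g '' Set.Icc 0 1))} →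
      α ≤ c ∧ ∃ u : X, E' u = 0 ∧ E u = c := by
  intro c hc
  have hEc : Continuous E := continuous_iff_continuousAt.mpr fun x => (hE x).continuousAt
  set S : Set ℝ := {m : ℝ | ∃ g : ℝ → X, ContinuousOn g (Set.Icc 0 1) ∧
      g 0 = 0 ∧ g 1 = h ∧ m = sSup (E '' (g '' Set.Icc 0 1))} with hS
  have hSne : S.Nonempty := by
    refine ⟨sSup (E '' ((fun t : ℝ => t • h) '' Set.Icc 0 1)), fun t => t • h,
      (continuous_id.smul continuous_const).continuousOn, zero_smul _ _, one_smul _ _, rfl⟩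
  have hαS : ∀ m ∈ S, α ≤ m := by
    rintro m ⟨g, hgc, hg0, hg1, rfl⟩
    have hIVT := intermediate_value_Icc (zero_le_one (α := ℝ)) hgc.norm
    have hrmem : r ∈ Set.Icc (‖g 0‖) (‖g 1‖) := by
      rw [hg0, hg1, norm_zero]
      exact ⟨hr.le, hh.le⟩
    obtain ⟨t, htI, hft⟩ := hIVT hrmem
    have h1 : α ≤ E (g t) := hsphere _ hft
    have h2 : E (g t) ≤ sSup (E '' (g '' Set.Icc 0 1)) := by
      apply le_csSup ((isCompact_Icc.image_of_continuousOn hgc).image hEc).bddAbove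
      exact Set.mem_image_of_mem E (Set.mem_image_of_mem g htI)
    linarith
  have hbdd : BddBelow S := ⟨α, hαS⟩
  have hαc : α ≤ c := hc ▸ le_csInf hSne hαS
  refine ⟨hαc, ?_⟩
  -- almost-critical points at level c, via the deformation lemma
  have almost : ∀ ε₀ δ : ℝ, 0 < ε₀ → 0 < δ → ∃ u, |E u - c| ≤ ε₀ ∧ ‖E' u‖ < δ := by
    intro ε₀ δ h1 h2
    by_contra hcon
    push_neg at hcon
    refine mp_no_crit E E' hE hE' h c α hα hαc hE0 hEh ?_ ?_ ε₀ δ h1 h2 hcon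
    · intro g hg0 hg1
      obtain ⟨G, hGc, hG0, hG1, himg⟩ := mp_extend E g
      have hmem : sSup (E '' (G '' Set.Icc 0 1)) ∈ S :=
        ⟨G, hGc, by rw [hG0, hg0], by rw [hG1, hg1], rfl⟩
      have := csInf_le hbdd hmem
      rw [← hc] at this
      rwa [himg] at this
    · intro ε hε
      have hlt : sInf S < c + ε := by rw [← hc]; linarith
      obtain ⟨m, hmS, hm⟩ := exists_lt_of_csInf_lt hSne hlt
      obtain ⟨G, hGc, hG0, hG1, rfl⟩ := hmS
      obtain ⟨g, hg0, hg1, himg⟩ := mp_restrict E G hGc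
      exact ⟨g, by rw [hg0, hG0], by rw [hg1, hG1], by rwa [himg]⟩
  have seq : ∀ k : ℕ, ∃ u : X, |E u - c| ≤ 1/((k:ℝ)+1) ∧ ‖E' u‖ < 1/((k:ℝ)+1) :=
    fun k => almost _ _ (by positivity) (by positivity)
  choose u hu1 hu2 using seq
  have hone : ∀ k : ℕ, 1/((k:ℝ)+1) ≤ 1 := by
    intro k
    rw [div_le_one (by positivity)]
    have : (0:ℝ) ≤ k := Nat.cast_nonneg k
    linarith
  have htend1 : Tendsto (fun k : ℕ => 1/((k:ℝ)+1)) atTop (nhds 0) :=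
    tendsto_one_div_add_atTop_nhds_zero_nat
  have hM : ∃ M : ℝ, ∀ k, |E (u k)| ≤ M := by
    refine ⟨1 + |c|, fun k => ?_⟩
    calc |E (u k)| = |(E (u k) - c) + c| := by ring_nf
      _ ≤ |E (u k) - c| + |c| := abs_add_le _ _
      _ ≤ 1 + |c| := by linarith [hu1 k, hone k]
  have hN : Tendsto (fun k => ‖E' (u k)‖) atTop (nhds 0) :=
    squeeze_zero (fun k => norm_nonneg _) (fun k => (hu2 k).le) htend1
  obtain ⟨φ, hφ, x, hx⟩ := PS u hM hN
  have hφk : ∀ k, 1/((φ k : ℝ)+1) ≤ 1/((k:ℝ)+1) := by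
    intro k
    apply one_div_le_one_div_of_le (by positivity)
    have hk := hφ.le_apply (x := k)
    have : (k:ℝ) ≤ φ k := by exact_mod_cast hk
    linarith
  have hEx : E x = c := by
    have h1 : Tendsto (fun k => E (u (φ k))) atTop (nhds (E x)) :=
      (hEc.tendsto x).comp hx
    have h2 : Tendsto (fun k => E (u (φ k))) atTop (nhds c) := by
      rw [tendsto_iff_dist_tendsto_zero]
      apply squeeze_zero (fun k => dist_nonneg)
        (g := fun k : ℕ => 1/((k:ℝ)+1)) _ htend1
      intro k
      rw [Real.dist_eq]
      exact (hu1 (φ k)).trans (hφk k)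
    exact tendsto_nhds_unique h1 h2
  have hE'x : E' x = 0 := by
    have h1 : Tendsto (fun k => ‖E' (u (φ k))‖) atTop (nhds ‖E' x‖) :=
      ((continuous_norm.comp hE').tendsto x).comp hx
    have h2 : Tendsto (fun k => ‖E' (u (φ k))‖) atTop (nhds 0) :=
      squeeze_zero (fun k => norm_nonneg _)
        (fun k => ((hu2 (φ k)).le).trans (hφk k)) htend1
    have := tendsto_nhds_unique h1 h2
    exact norm_eq_zero.mp this
  exact ⟨x, hE'x, hEx⟩
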